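/- Let H be a complex Hilbert space and T ∈ B(H) a CPD operator. The following are equivalent: (i) the sequence {T^{*(n+1)}T^{n+1} − T^{*n}Tⁿ}_{n≥0} converges in the weak operator topology; (ii) sup_{n∈ℤ₊} ‖T^{*(n+1)}T^{n+1} − T^{*n}Tⁿ‖ < ∞; (iii) for every h ∈ H, sup_{n∈ℤ₊} (‖T^{n+1}h‖² − ‖Tⁿh‖²) < ∞. -/

import Mathlib

open MeasureTheory Filter Topology ContinuousLinearMap
open scoped ComplexOrder

noncomputable section

/-- A real sequence `γ` is *conditionally positive definite* (CPD) if
`∑_{i,j=0}^k γ_{i+j} λ_i conj(λ_j) ≥ 0` for all finite sequences `λ_0, …, λ_k` of complex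
numbers with `∑_{i=0}^k λ_i = 0`. -/
def IsCPDSeq (γ : ℕ → ℝ) : Prop :=
  ∀ (k : ℕ) (l : ℕ → ℂ), ∑ i ∈ Finset.range (k + 1), l i = 0 →
    0 ≤ ∑ i ∈ Finset.range (k + 1), ∑ j ∈ Finset.range (k + 1),
        (γ (i + j) : ℂ) * l i * (starRingEnd ℂ) (l j)

/-- An operator `T ∈ B(H)` is *conditionally positive definite* (CPD) if for every `h ∈ H` the
sequence `{‖Tⁿh‖²}ₙ` is CPD. -/
def IsCPDOp {H : Type*} [NormedAddCommGroup H] [InnerProductSpace ℂ H] [CompleteSpace H]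
    (T : H →L[ℂ] H) : Prop :=
  ∀ h : H, IsCPDSeq fun n => ‖(T ^ n) h‖ ^ 2

/-- The operator `B_m(T) = ∑_{k=0}^m (-1)^k (m choose k) T^{*k} Tᵏ`. -/
def bOp {H : Type*} [NormedAddCommGroup H] [InnerProductSpace ℂ H] [CompleteSpace H]
    (T : H →L[ℂ] H) (m : ℕ) : H →L[ℂ] H :=
  ∑ k ∈ Finset.range (m + 1),
    ((-1 : ℂ) ^ k * (m.choose k : ℂ)) • (adjoint (T ^ k) * T ^ k)

namespace CPDAux

variable {H : Type*} [NormedAddCommGroup H] [InnerProductSpace ℂ H] [CompleteSpace H]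

lemma inner_ATA (T : H →L[ℂ] H) (n : ℕ) (h : H) :
    (inner ℂ ((adjoint (T ^ n) * T ^ n) h) h : ℂ) = ((‖(T ^ n) h‖ ^ 2 : ℝ) : ℂ) := by
  rw [ContinuousLinearMap.mul_apply, adjoint_inner_left, inner_self_eq_norm_sq_to_K]
  norm_cast

lemma inner_S (T : H →L[ℂ] H) (n : ℕ) (h : H) :
    (inner ℂ ((adjoint (T ^ (n + 1)) * T ^ (n + 1) - adjoint (T ^ n) * T ^ n) h) h : ℂ)
      = ((‖(T ^ (n + 1)) h‖ ^ 2 - ‖(T ^ n) h‖ ^ 2 : ℝ) : ℂ) := by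
  rw [ContinuousLinearMap.sub_apply, inner_sub_left, inner_ATA, inner_ATA]
  push_cast; ring

/-- Uniform boundedness from pointwise weak boundedness, by two applications of
Banach–Steinhaus. -/
lemma ubp (S : ℕ → H →L[ℂ] H)
    (hpt : ∀ f g : H, ∃ C, ∀ n, ‖(inner ℂ (S n f) g : ℂ)‖ ≤ C) :
    ∃ m : ℝ, ∀ n, ‖S n‖ ≤ m := by
  have step1 : ∀ f : H, ∃ C, ∀ n, ‖S n f‖ ≤ C := by
    intro f
    obtain ⟨C, hC⟩ := banach_steinhaus (g := fun n => innerSL ℂ (S n f)) (fun g => by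
      obtain ⟨C, hC⟩ := hpt f g
      exact ⟨C, fun n => by simpa using hC n⟩)
    exact ⟨C, fun n => by simpa [innerSL_apply_norm] using hC n⟩
  exact banach_steinhaus step1

lemma cpd_convex {γ : ℕ → ℝ} (hγ : IsCPDSeq γ) : γ 0 - 2 * γ 1 + γ 2 ≥ 0 := by
  have key := hγ 1 (fun i => if i = 0 then 1 else -1) (by
    simp [Finset.sum_range_succ])
  have e : ∑ i ∈ Finset.range 2, ∑ j ∈ Finset.range 2,
      (γ (i + j) : ℂ) * (if i = 0 then (1:ℂ) else -1) *
        (starRingEnd ℂ) (if j = 0 then (1:ℂ) else -1)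
      = ((γ 0 - 2 * γ 1 + γ 2 : ℝ) : ℂ) := by
    simp [Finset.sum_range_succ]
    ring
  rw [e] at key
  exact Complex.zero_le_real.mp key

/-- For a CPD operator the sequence `n ↦ ‖T^{n+1}h‖² - ‖Tⁿh‖²` is nondecreasing. -/
lemma q_mono (T : H →L[ℂ] H) (hT : IsCPDOp T) (h : H) :
    Monotone (fun n => ‖(T ^ (n + 1)) h‖ ^ 2 - ‖(T ^ n) h‖ ^ 2) := by
  apply monotone_nat_of_le_succ
  intro n
  have key := cpd_convex (hT ((T ^ n) h))
  have hcomp : ∀ m : ℕ, (T ^ (m + n)) h = (T ^ m) ((T ^ n) h) := fun m => by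
    rw [pow_add, ContinuousLinearMap.mul_apply]
  have n0 : ‖(T ^ (0 : ℕ)) ((T ^ n) h)‖ = ‖(T ^ n) h‖ := by
    rw [← hcomp]; norm_num
  have n1 : ‖(T ^ (1 : ℕ)) ((T ^ n) h)‖ = ‖(T ^ (n + 1)) h‖ := by
    rw [← hcomp, add_comm]
  have n2 : ‖(T ^ (2 : ℕ)) ((T ^ n) h)‖ = ‖(T ^ (n + 1 + 1)) h‖ := by
    rw [← hcomp, show (2 : ℕ) + n = n + 1 + 1 from by ring]
  rw [n0, n1, n2] at key
  linarith

lemma norm_quarter (a b c d : ℂ) :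
    ‖(a - b + Complex.I * c - Complex.I * d) / 4‖ ≤ (‖a‖ + ‖b‖ + ‖c‖ + ‖d‖) / 4 := by
  rw [norm_div]
  have h4 : ‖(4 : ℂ)‖ = 4 := by norm_num
  rw [h4]
  have : ‖a - b + Complex.I * c - Complex.I * d‖ ≤ ‖a‖ + ‖b‖ + ‖c‖ + ‖d‖ := by
    calc ‖a - b + Complex.I * c - Complex.I * d‖
        ≤ ‖a - b + Complex.I * c‖ + ‖Complex.I * d‖ := norm_sub_le _ _
      _ ≤ (‖a - b‖ + ‖Complex.I * c‖) + ‖Complex.I * d‖ := by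
          gcongr; exact norm_add_le _ _
      _ ≤ ((‖a‖ + ‖b‖) + ‖Complex.I * c‖) + ‖Complex.I * d‖ := by
          gcongr; exact norm_sub_le _ _
      _ = ‖a‖ + ‖b‖ + ‖c‖ + ‖d‖ := by
          simp [norm_mul]
  linarith

end CPDAux

open CPDAux in
/-- Proposition `unif-bund`: for a CPD operator `T` the following are equivalent:
(i) the sequence `{T^{*(n+1)}T^{n+1} - T^{*n}Tⁿ}ₙ` converges in the weak operator topology;
(ii) `sup_n ‖T^{*(n+1)}T^{n+1} - T^{*n}Tⁿ‖ < ∞`;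
(iii) `sup_n (‖T^{n+1}h‖² - ‖Tⁿh‖²) < ∞` for every `h ∈ H`. -/
theorem cpd_wot_convergence_iff_bounded {H : Type*} [NormedAddCommGroup H]
    [InnerProductSpace ℂ H] [CompleteSpace H] (T : H →L[ℂ] H) (hT : IsCPDOp T) :
    ((∃ D : H →L[ℂ] H, ∀ f g : H,
        Tendsto
          (fun n : ℕ =>
            @inner ℂ H _ ((adjoint (T ^ (n + 1)) * T ^ (n + 1) - adjoint (T ^ n) * T ^ n) f) g)
          atTop (𝓝 (@inner ℂ H _ (D f) g))) ↔
      ∃ m : ℝ, ∀ n : ℕ,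
        ‖adjoint (T ^ (n + 1)) * T ^ (n + 1) - adjoint (T ^ n) * T ^ n‖ ≤ m) ∧
    ((∃ m : ℝ, ∀ n : ℕ,
        ‖adjoint (T ^ (n + 1)) * T ^ (n + 1) - adjoint (T ^ n) * T ^ n‖ ≤ m) ↔
      ∀ h : H, ∃ m : ℝ, ∀ n : ℕ, ‖(T ^ (n + 1)) h‖ ^ 2 - ‖(T ^ n) h‖ ^ 2 ≤ m) := by
  set S : ℕ → H →L[ℂ] H :=
    fun n => adjoint (T ^ (n + 1)) * T ^ (n + 1) - adjoint (T ^ n) * T ^ n with hSdef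
  set q : ℕ → H → ℝ := fun n h => ‖(T ^ (n + 1)) h‖ ^ 2 - ‖(T ^ n) h‖ ^ 2 with hqdef
  have hSq : ∀ (n : ℕ) (h : H), (inner ℂ (S n h) h : ℂ) = ((q n h : ℝ) : ℂ) :=
    fun n h => inner_S T n h
  have hqmono : ∀ h : H, Monotone fun n => q n h := fun h => q_mono T hT h
  -- polarization identity for the S n
  have polar : ∀ (n : ℕ) (f g : H), (inner ℂ (S n f) g : ℂ) =
      ((inner ℂ (S n (g + f)) (g + f) : ℂ) - (inner ℂ (S n (g - f)) (g - f) : ℂ) +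
        Complex.I * (inner ℂ (S n (g + Complex.I • f)) (g + Complex.I • f) : ℂ) -
        Complex.I * (inner ℂ (S n (g - Complex.I • f)) (g - Complex.I • f) : ℂ)) / 4 := by
    intro n f g
    have := inner_map_polarization ((S n : H →ₗ[ℂ] H)) g f
    simpa only [ContinuousLinearMap.coe_coe] using this
  -- (ii) → (iii)
  have h2to3 : (∃ m : ℝ, ∀ n, ‖S n‖ ≤ m) → ∀ h : H, ∃ m : ℝ, ∀ n, q n h ≤ m := by
    rintro ⟨m, hm⟩ h
    refine ⟨m * ‖h‖ * ‖h‖, fun n => ?_⟩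
    have h1 : |q n h| ≤ ‖S n h‖ * ‖h‖ := by
      have := norm_inner_le_norm (𝕜 := ℂ) (S n h) h
      rw [hSq] at this
      simpa using this
    have h2 : ‖S n h‖ * ‖h‖ ≤ m * ‖h‖ * ‖h‖ := by
      gcongr
      exact ((S n).le_opNorm h).trans (by gcongr; exact hm n)
    calc q n h ≤ |q n h| := le_abs_self _
      _ ≤ ‖S n h‖ * ‖h‖ := h1
      _ ≤ m * ‖h‖ * ‖h‖ := h2
  -- (iii) → (ii)
  have h3to2 : (∀ h : H, ∃ m : ℝ, ∀ n, q n h ≤ m) → ∃ m : ℝ, ∀ n, ‖S n‖ ≤ m := by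
    intro h3
    apply ubp
    have hpt : ∀ z : H, ∃ C, ∀ n, ‖(inner ℂ (S n z) z : ℂ)‖ ≤ C := by
      intro z
      obtain ⟨mz, hmz⟩ := h3 z
      refine ⟨max mz (-(q 0 z)), fun n => ?_⟩
      rw [hSq]
      have hnr : ‖((q n z : ℝ) : ℂ)‖ = |q n z| := by
        simp [Complex.norm_real]
      rw [hnr, abs_le]
      have hlow : q 0 z ≤ q n z := hqmono z (Nat.zero_le n)
      constructor
      · have := le_max_right mz (-(q 0 z)); linarith
      · exact (hmz n).trans (le_max_left _ _)
    choose Cz hCz using hpt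
    intro f g
    refine ⟨(Cz (g + f) + Cz (g - f) + Cz (g + Complex.I • f) + Cz (g - Complex.I • f)) / 4,
      fun n => ?_⟩
    rw [polar n f g]
    refine (norm_quarter _ _ _ _).trans ?_
    gcongr
    · exact hCz _ n
    · exact hCz _ n
    · exact hCz _ n
    · exact hCz _ n
  -- (i) → (ii)
  have h1to2 : (∃ D : H →L[ℂ] H, ∀ f g : H,
      Tendsto (fun n : ℕ => (inner ℂ (S n f) g : ℂ)) atTop (𝓝 (inner ℂ (D f) g))) →
      ∃ m : ℝ, ∀ n, ‖S n‖ ≤ m := by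
    rintro ⟨D, hD⟩
    apply ubp
    intro f g
    obtain ⟨C, hC⟩ := ((hD f g).norm.isBoundedUnder_le).bddAbove_range
    exact ⟨C, fun n => hC ⟨n, rfl⟩⟩
  -- (ii) → (i)
  have h2to1 : (∃ m : ℝ, ∀ n, ‖S n‖ ≤ m) → ∃ D : H →L[ℂ] H, ∀ f g : H,
      Tendsto (fun n : ℕ => (inner ℂ (S n f) g : ℂ)) atTop (𝓝 (inner ℂ (D f) g)) := by
    rintro ⟨m, hm⟩
    have hm0 : 0 ≤ m := le_trans (norm_nonneg _) (hm 0)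
    -- q n z bounded above
    have hqbd : ∀ (n : ℕ) (z : H), q n z ≤ m * ‖z‖ * ‖z‖ := by
      intro n z
      have h1 : |q n z| ≤ ‖S n z‖ * ‖z‖ := by
        have := norm_inner_le_norm (𝕜 := ℂ) (S n z) z
        rw [hSq] at this
        simpa using this
      have h2 : ‖S n z‖ * ‖z‖ ≤ m * ‖z‖ * ‖z‖ := by
        gcongr
        exact ((S n).le_opNorm z).trans (by gcongr; exact hm n)
      calc q n z ≤ |q n z| := le_abs_self _
        _ ≤ ‖S n z‖ * ‖z‖ := h1
        _ ≤ m * ‖z‖ * ‖z‖ := h2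
    have hbdd : ∀ z : H, BddAbove (Set.range fun n => q n z) := by
      intro z
      exact ⟨m * ‖z‖ * ‖z‖, by rintro _ ⟨n, rfl⟩; exact hqbd n z⟩
    set L : H → ℝ := fun z => ⨆ n, q n z with hLdef
    have hLt : ∀ z : H, Tendsto (fun n => q n z) atTop (𝓝 (L z)) := fun z =>
      tendsto_atTop_ciSup (hqmono z) (hbdd z)
    have hLtC : ∀ z : H, Tendsto (fun n => ((q n z : ℝ) : ℂ)) atTop (𝓝 ((L z : ℝ) : ℂ)) :=
      fun z => (Complex.continuous_ofReal.tendsto _).comp (hLt z)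
    set B : H → H → ℂ := fun f g =>
      (((L (g + f) : ℝ) : ℂ) - ((L (g - f) : ℝ) : ℂ) +
        Complex.I * ((L (g + Complex.I • f) : ℝ) : ℂ) -
        Complex.I * ((L (g - Complex.I • f) : ℝ) : ℂ)) / 4 with hBdef
    have hBt : ∀ f g : H, Tendsto (fun n : ℕ => (inner ℂ (S n f) g : ℂ)) atTop (𝓝 (B f g)) := by
      intro f g
      have he : (fun n : ℕ => (inner ℂ (S n f) g : ℂ)) = fun n =>
          ((((q n (g + f) : ℝ) : ℂ) - ((q n (g - f) : ℝ) : ℂ) +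
            Complex.I * ((q n (g + Complex.I • f) : ℝ) : ℂ) -
            Complex.I * ((q n (g - Complex.I • f) : ℝ) : ℂ)) / 4) := by
        funext n
        rw [polar n f g, hSq, hSq, hSq, hSq]
      rw [he]
      exact ((((hLtC (g + f)).sub (hLtC (g - f))).add
        ((hLtC (g + Complex.I • f)).const_mul Complex.I)).sub
        ((hLtC (g - Complex.I • f)).const_mul Complex.I)).div_const 4
    have hBbound : ∀ f g : H, ‖B f g‖ ≤ m * ‖f‖ * ‖g‖ := by
      intro f g
      refine le_of_tendsto (hBt f g).norm (Filter.Eventually.of_forall fun n => ?_)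
      calc ‖(inner ℂ (S n f) g : ℂ)‖ ≤ ‖S n f‖ * ‖g‖ := norm_inner_le_norm _ _
        _ ≤ (m * ‖f‖) * ‖g‖ := by
            gcongr
            exact ((S n).le_opNorm f).trans (by gcongr; exact hm n)
    have hBadd_r : ∀ f g₁ g₂ : H, B f (g₁ + g₂) = B f g₁ + B f g₂ := by
      intro f g₁ g₂
      refine tendsto_nhds_unique ?_ ((hBt f g₁).add (hBt f g₂))
      simpa only [inner_add_right] using hBt f (g₁ + g₂)
    have hBsmul_r : ∀ (c : ℂ) (f g : H), B f (c • g) = c * B f g := by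
      intro c f g
      refine tendsto_nhds_unique ?_ ((hBt f g).const_mul c)
      simpa only [inner_smul_right] using hBt f (c • g)
    have key : ∀ f : H, ∃ v : H, ∀ g : H, (inner ℂ v g : ℂ) = B f g := by
      intro f
      let ℓ : H →ₗ[ℂ] ℂ :=
        { toFun := fun g => B f g
          map_add' := hBadd_r f
          map_smul' := fun c g => by simpa using hBsmul_r c f g }
      let φ : H →L[ℂ] ℂ := LinearMap.mkContinuous ℓ (m * ‖f‖) (fun g => by
        simpa [mul_assoc, ℓ] using hBbound f g)
      exact ⟨(InnerProductSpace.toDual ℂ H).symm φ, fun g =>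
        InnerProductSpace.toDual_symm_apply⟩
    choose Dv hDv using key
    have hadd : ∀ f₁ f₂ : H, Dv (f₁ + f₂) = Dv f₁ + Dv f₂ := by
      intro f₁ f₂
      refine ext_inner_right ℂ fun g => ?_
      rw [hDv, inner_add_left, hDv, hDv]
      refine tendsto_nhds_unique ?_ ((hBt f₁ g).add (hBt f₂ g))
      simpa only [map_add, inner_add_left] using hBt (f₁ + f₂) g
    have hsmul : ∀ (c : ℂ) (f : H), Dv (c • f) = c • Dv f := by
      intro c f
      refine ext_inner_right ℂ fun g => ?_
      rw [hDv, inner_smul_left, hDv]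
      refine tendsto_nhds_unique ?_ ((hBt f g).const_mul ((starRingEnd ℂ) c))
      simpa only [_root_.map_smul, inner_smul_left] using hBt (c • f) g
    have hDbound : ∀ f : H, ‖Dv f‖ ≤ m * ‖f‖ := by
      intro f
      have h1 : (inner ℂ (Dv f) (Dv f) : ℂ) = B f (Dv f) := hDv f (Dv f)
      have h2 : ‖(inner ℂ (Dv f) (Dv f) : ℂ)‖ = ‖Dv f‖ ^ 2 := by
        rw [inner_self_eq_norm_sq_to_K]
        simp [← Complex.ofReal_pow]
      have h3 : ‖Dv f‖ ^ 2 ≤ m * ‖f‖ * ‖Dv f‖ := by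
        rw [← h2, h1]; exact hBbound f (Dv f)
      nlinarith [norm_nonneg (Dv f), norm_nonneg f, mul_nonneg hm0 (norm_nonneg f)]
    let D : H →L[ℂ] H := LinearMap.mkContinuous
      { toFun := Dv
        map_add' := hadd
        map_smul' := fun c f => by simpa using hsmul c f } m (fun f => hDbound f)
    refine ⟨D, fun f g => ?_⟩
    have hDf : (inner ℂ (D f) g : ℂ) = B f g := hDv f g
    rw [hDf]
    exact hBt f g
  exact ⟨⟨h1to2, h2to1⟩, ⟨h2to3, h3to2⟩⟩

end
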